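/- Consider a k-step perturbed linear multistep method u_n = ∑_{j=0}^{k-1} α_j u_{n−k+j} + Δt ∑_{j=0}^{k} (β_j F(u_{n−k+j}) − β̃_j F̃(u_{n−k+j})), with ∑_{j=0}^{k-1} α_j = 1. Suppose F satisfies ‖u + Δt F(u)‖ ≤ ‖u‖ for 0 ≤ Δt ≤ Δt_FE, F̃ satisfies ‖u − Δt F̃(u)‖ ≤ ‖u‖ for 0 ≤ Δt ≤ Δ̃t_FE, and the SSP conditions hold: β_j, β̃_j ≥ 0 for all j, and α_j − C β_j − C̃ β̃_j ≥ 0 for j = 0,...,k−1, for constants C, C̃ ≥ 0. Then for any step size Δt ≤ min{C Δt_FE, C̃ Δ̃t_FE}, the numerical solution satisfies ‖u_n‖ ≤ max{‖u_{n−1}‖, ..., ‖u_{n−k}‖}. -/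

import Mathlib

/-- Monotonicity of SSP perturbed linear multistep methods with different forward Euler
conditions for the upwind and downwind operators. -/
theorem stmt_4 (m k : ℕ) (hk : 0 < k) (N : (Fin m → ℝ) → ℝ)
    (hsub : ∀ u v : Fin m → ℝ, N (u + v) ≤ N u + N v)
    (hhom : ∀ (c : ℝ) (u : Fin m → ℝ), 0 ≤ c → N (c • u) = c * N u)
    (F Ft : (Fin m → ℝ) → (Fin m → ℝ))
    (ΔtFE ΔttFE : ℝ) (hΔtFE : 0 < ΔtFE) (hΔttFE : 0 < ΔttFE)
    (hF : ∀ (u : Fin m → ℝ) (τ : ℝ), 0 ≤ τ → τ ≤ ΔtFE → N (u + τ • F u) ≤ N u)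
    (hFt : ∀ (u : Fin m → ℝ) (τ : ℝ), 0 ≤ τ → τ ≤ ΔttFE → N (u - τ • Ft u) ≤ N u)
    (α : Fin k → ℝ) (β βt : Fin (k + 1) → ℝ)
    (hconsist : ∑ j, α j = 1)
    (C Ct : ℝ) (hC : 0 ≤ C) (hCt : 0 ≤ Ct)
    (hβ : ∀ j, 0 ≤ β j) (hβt : ∀ j, 0 ≤ βt j)
    (hssp : ∀ j : Fin k, 0 ≤ α j - C * β j.castSucc - Ct * βt j.castSucc)
    (Δt : ℝ) (hΔt0 : 0 ≤ Δt) (hΔt : Δt ≤ min (C * ΔtFE) (Ct * ΔttFE))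
    (uprev : Fin k → (Fin m → ℝ)) (un : Fin m → ℝ)
    (hstep : un = ∑ j : Fin k, α j • uprev j +
      Δt • ((∑ j : Fin k, (β j.castSucc • F (uprev j) - βt j.castSucc • Ft (uprev j))) +
        (β (Fin.last k) • F un - βt (Fin.last k) • Ft un))) :
    N un ≤ Finset.univ.sup' (Finset.univ_nonempty_iff.mpr ⟨⟨0, hk⟩⟩)
      (fun j : Fin k => N (uprev j)) := by
  classical
  set M := Finset.univ.sup' (Finset.univ_nonempty_iff.mpr ⟨⟨0, hk⟩⟩)
      (fun j : Fin k => N (uprev j)) with hMdef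
  have hzero : N (0 : Fin m → ℝ) = 0 := by
    have := hhom 0 0 le_rfl
    simpa using this
  have hMle : ∀ j, N (uprev j) ≤ M := fun j =>
    Finset.le_sup' (fun j : Fin k => N (uprev j)) (Finset.mem_univ j)
  have hα : ∀ j, 0 ≤ α j := by
    intro j
    have h1 := hssp j
    have h2 := mul_nonneg hC (hβ j.castSucc)
    have h3 := mul_nonneg hCt (hβt j.castSucc)
    linarith
  have Nsum : ∀ (f : Fin k → Fin m → ℝ), N (∑ i, f i) ≤ ∑ i, N (f i) := by
    intro f
    induction (Finset.univ : Finset (Fin k)) using Finset.induction with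
    | empty => simp [hzero]
    | insert _ _ h ih =>
        rw [Finset.sum_insert h, Finset.sum_insert h]
        exact le_trans (hsub _ _) (by linarith)
  rcases eq_or_lt_of_le hΔt0 with hΔtz | hΔtpos
  · -- Δt = 0
    have hun : un = ∑ j : Fin k, α j • uprev j := by
      rw [hstep, ← hΔtz]; simp
    calc N un ≤ ∑ j, N (α j • uprev j) := by rw [hun]; exact Nsum _
      _ = ∑ j, α j * N (uprev j) := by
          exact Finset.sum_congr rfl fun j _ => hhom _ _ (hα j)
      _ ≤ ∑ j, α j * M :=
          Finset.sum_le_sum fun j _ => mul_le_mul_of_nonneg_left (hMle j) (hα j)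
      _ = M := by rw [← Finset.sum_mul, hconsist, one_mul]
  · -- Δt > 0
    have hCpos : 0 < C := by
      have h1 : Δt ≤ C * ΔtFE := le_trans hΔt (min_le_left _ _)
      nlinarith
    have hCtpos : 0 < Ct := by
      have h1 : Δt ≤ Ct * ΔttFE := le_trans hΔt (min_le_right _ _)
      nlinarith
    obtain ⟨τ, hCτ⟩ : ∃ τ, C * τ = Δt := ⟨Δt / C, by field_simp⟩
    obtain ⟨τt, hCtτt⟩ : ∃ τt, Ct * τt = Δt := ⟨Δt / Ct, by field_simp⟩
    have hτ0 : 0 ≤ τ := by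
      by_contra h
      push_neg at h
      nlinarith
    have hτt0 : 0 ≤ τt := by
      by_contra h
      push_neg at h
      nlinarith
    have hτle : τ ≤ ΔtFE := by
      have h1 : Δt ≤ C * ΔtFE := le_trans hΔt (min_le_left _ _)
      nlinarith
    have hτtle : τt ≤ ΔttFE := by
      have h1 : Δt ≤ Ct * ΔttFE := le_trans hΔt (min_le_right _ _)
      nlinarith
    set S : Fin m → ℝ := ∑ j : Fin k, α j • uprev j +
      Δt • (∑ j : Fin k, (β j.castSucc • F (uprev j) - βt j.castSucc • Ft (uprev j)))
      with hSdef
    set a := C * β (Fin.last k) with hadef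
    set at' := Ct * βt (Fin.last k) with hatdef
    have ha0 : 0 ≤ a := mul_nonneg hC (hβ _)
    have hat0 : 0 ≤ at' := mul_nonneg hCt (hβt _)
    have hS : un = S + Δt • (β (Fin.last k) • F un - βt (Fin.last k) • Ft un) := by
      rw [hSdef]
      conv_lhs => rw [hstep]
      rw [smul_add, ← add_assoc]
    -- key identity for the implicit part
    have key : (1 + a + at') • un =
        S + a • (un + τ • F un) + at' • (un - τt • Ft un) := by
      funext i
      have h := congrFun hS i
      simp only [Pi.add_apply, Pi.sub_apply, Pi.smul_apply, smul_eq_mul] at h ⊢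
      rw [hadef, hatdef]
      linear_combination h - β (Fin.last k) * F un i * hCτ +
        βt (Fin.last k) * Ft un i * hCtτt
    -- bound N un ≤ N S
    have hNun : N un ≤ N S := by
      have e1 : N ((1 + a + at') • un) = (1 + a + at') * N un :=
        hhom _ _ (by linarith)
      have b1 : N (a • (un + τ • F un)) ≤ a * N un := by
        rw [hhom _ _ ha0]
        exact mul_le_mul_of_nonneg_left (hF un τ hτ0 hτle) ha0
      have b2 : N (at' • (un - τt • Ft un)) ≤ at' * N un := by
        rw [hhom _ _ hat0]
        exact mul_le_mul_of_nonneg_left (hFt un τt hτt0 hτtle) hat0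
      have e2 : N (S + a • (un + τ • F un) + at' • (un - τt • Ft un)) ≤
          N S + a * N un + at' * N un := by
        have h3 := hsub (S + a • (un + τ • F un)) (at' • (un - τt • Ft un))
        have h4 := hsub S (a • (un + τ • F un))
        linarith
      rw [← key, e1] at e2
      linarith
    -- decompose S
    set g : Fin k → Fin m → ℝ := fun j =>
      (α j - C * β j.castSucc - Ct * βt j.castSucc) • uprev j +
        (C * β j.castSucc) • (uprev j + τ • F (uprev j)) +
        (Ct * βt j.castSucc) • (uprev j - τt • Ft (uprev j)) with hgdef
    have hSdecomp : S = ∑ j : Fin k, g j := by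
      rw [hSdef, Finset.smul_sum, ← Finset.sum_add_distrib]
      refine Finset.sum_congr rfl fun j _ => ?_
      rw [hgdef]
      funext i
      simp only [Pi.add_apply, Pi.sub_apply, Pi.smul_apply, smul_eq_mul]
      linear_combination (-(β j.castSucc * F (uprev j) i)) * hCτ +
        βt j.castSucc * Ft (uprev j) i * hCtτt
    have hterm : ∀ j : Fin k, N (g j) ≤ α j * M := by
      intro j
      have w1 : 0 ≤ α j - C * β j.castSucc - Ct * βt j.castSucc := hssp j
      have w2 : 0 ≤ C * β j.castSucc := mul_nonneg hC (hβ _)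
      have w3 : 0 ≤ Ct * βt j.castSucc := mul_nonneg hCt (hβt _)
      have b1 : N ((α j - C * β j.castSucc - Ct * βt j.castSucc) • uprev j) ≤
          (α j - C * β j.castSucc - Ct * βt j.castSucc) * M := by
        rw [hhom _ _ w1]; exact mul_le_mul_of_nonneg_left (hMle j) w1
      have b2 : N ((C * β j.castSucc) • (uprev j + τ • F (uprev j))) ≤
          (C * β j.castSucc) * M := by
        rw [hhom _ _ w2]
        exact mul_le_mul_of_nonneg_left
          (le_trans (hF (uprev j) τ hτ0 hτle) (hMle j)) w2
      have b3 : N ((Ct * βt j.castSucc) • (uprev j - τt • Ft (uprev j))) ≤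
          (Ct * βt j.castSucc) * M := by
        rw [hhom _ _ w3]
        exact mul_le_mul_of_nonneg_left
          (le_trans (hFt (uprev j) τt hτt0 hτtle) (hMle j)) w3
      have h5 := hsub ((α j - C * β j.castSucc - Ct * βt j.castSucc) • uprev j +
          (C * β j.castSucc) • (uprev j + τ • F (uprev j)))
          ((Ct * βt j.castSucc) • (uprev j - τt • Ft (uprev j)))
      have h6 := hsub ((α j - C * β j.castSucc - Ct * βt j.castSucc) • uprev j)
          ((C * β j.castSucc) • (uprev j + τ • F (uprev j)))
      rw [hgdef]
      linarith
    have hNS : N S ≤ M := by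
      calc N S ≤ ∑ j, N (g j) := by rw [hSdecomp]; exact Nsum _
        _ ≤ ∑ j, α j * M := Finset.sum_le_sum fun j _ => hterm j
        _ = M := by rw [← Finset.sum_mul, hconsist, one_mul]
    linarith
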